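/- Let φ be a white-noise random dynamical system on a complete separable metric space (E,d) over an ergodic metric dynamical system, admitting an invariant probability measure ρ. If for all x,y ∈ E the distance d(φ_t(·,x), φ_t(·,y)) converges to 0 in probability as t → ∞, then weak synchronization holds for φ. -/

import Mathlib

open MeasureTheory ProbabilityTheory Filter Topology
open scoped ENNReal

/-- A white-noise (filtered) random dynamical system on a metric space `E` over an ergodic
metric dynamical system `θ` on a probability space `(Ω, F, P)`. -/
structure WhiteNoiseRDS (Ω E : Type) [MeasurableSpace Ω] [MetricSpace E]
    [MeasurableSpace E] [BorelSpace E] where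
  /-- the underlying probability measure -/
  P : Measure Ω
  P_prob : IsProbabilityMeasure P
  /-- the metric dynamical system (group of shifts) -/
  θ : ℝ → Ω → Ω
  θ_meas : ∀ t, Measurable (θ t)
  θ_zero : ∀ ω, θ 0 ω = ω
  θ_add : ∀ s t : ℝ, ∀ ω, θ (s + t) ω = θ s (θ t ω)
  θ_preserves : ∀ t, MeasurePreserving (θ t) P P
  θ_ergodic : ∀ A : Set Ω, MeasurableSet A → (∀ t, θ t ⁻¹' A = A) → P A = 0 ∨ P A = 1
  /-- the cocycle -/
  φ : ℝ → Ω → E → E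
  φ_meas : Measurable fun p : ℝ × Ω × E => φ p.1 p.2.1 p.2.2
  φ_zero : ∀ ω x, φ 0 ω x = x
  φ_cocycle : ∀ s t : ℝ, 0 ≤ s → 0 ≤ t → ∀ ω x, φ (t + s) ω x = φ t (θ s ω) (φ s ω x)
  φ_cont : ∀ s : ℝ, 0 ≤ s → ∀ ω, Continuous fun x => φ s ω x
  /-- two-parameter filtration -/
  F : ℝ → ℝ → MeasurableSpace Ω
  F_le : ∀ s t : ℝ, F s t ≤ ‹MeasurableSpace Ω›
  F_mono : ∀ s t u v : ℝ, s ≤ t → t ≤ u → u ≤ v → F t u ≤ F s v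
  F_shift : ∀ r s t : ℝ, F (s + r) (t + r) = MeasurableSpace.comap (θ r) (F s t)
  F_indep : ∀ (n : ℕ) (ts : Fin (n + 1) → ℝ), Monotone ts →
    iIndep (fun i : Fin n => F (ts i.castSucc) (ts i.succ)) P
  φ_adapted : ∀ s : ℝ, 0 ≤ s → ∀ x : E, Measurable[F 0 s] fun ω => φ s ω x

namespace WhiteNoiseRDS

variable {Ω E : Type} [MeasurableSpace Ω] [MetricSpace E] [MeasurableSpace E] [BorelSpace E]

/-- `F_0`: the smallest σ-algebra containing all `F s 0`, `s ≤ 0`. -/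
def F0 (R : WhiteNoiseRDS Ω E) : MeasurableSpace Ω := ⨆ s ∈ Set.Iic (0 : ℝ), R.F s 0

/-- `ρ` is an invariant probability measure for the Markov semigroup associated to `φ`. -/
def Invariant (R : WhiteNoiseRDS Ω E) (ρ : Measure E) : Prop :=
  ∀ t : ℝ, 0 ≤ t → ∀ f : BoundedContinuousFunction E ℝ,
    ∫ x, (∫ ω, f (R.φ t ω x) ∂ R.P) ∂ρ = ∫ x, f x ∂ρ

/-- `φ` is strongly mixing w.r.t. `ρ`: the law of `φ_t(·,x)` converges weakly to `ρ`. -/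
def StronglyMixing (R : WhiteNoiseRDS Ω E) (ρ : Measure E) : Prop :=
  ∀ x : E, ∀ f : BoundedContinuousFunction E ℝ,
    Tendsto (fun t : ℝ => ∫ ω, f (R.φ t ω x) ∂ R.P) atTop (𝓝 (∫ y, f y ∂ρ))

/-- Weak global pointwise stability: there is a Borel set `U` of full `ρ`-measure and times
`t n ↑ ∞` such that any two points of `U` come `η`-close along `t n` with probability
bounded below by some `δ(x,y) > 0`. -/
def WeakGlobalPointwiseStability (R : WhiteNoiseRDS Ω E) (ρ : Measure E) : Prop :=
  ∃ U : Set E, MeasurableSet U ∧ ρ U = 1 ∧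
    ∃ t : ℕ → ℝ, StrictMono t ∧ Tendsto t atTop atTop ∧
      ∀ x ∈ U, ∀ y ∈ U, ∃ δ : ℝ≥0∞, 0 < δ ∧ ∀ η : ℝ, 0 < η →
        δ ≤ liminf (fun n => R.P {ω | dist (R.φ (t n) ω x) (R.φ (t n) ω y) ≤ η}) atTop

/-- Weak synchronization: there is an `F_0`-measurable random point `a` which is invariant
under the flow and attracts every deterministic point in probability (in the pullback sense). -/
def WeakSynchronization (R : WhiteNoiseRDS Ω E) : Prop :=
  ∃ a : Ω → E, Measurable[R.F0] a ∧
    (∀ t : ℝ, 0 ≤ t → ∀ᵐ ω ∂ R.P, R.φ t ω (a ω) = a (R.θ t ω)) ∧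
    ∀ x : E, ∀ ε : ℝ, 0 < ε →
      Tendsto (fun t : ℝ => R.P {ω | ε ≤ dist (R.φ t (R.θ (-t) ω) x) (a ω)}) atTop (𝓝 0)

end WhiteNoiseRDS

namespace WeakSyncAux

open MeasurableSpace
open scoped NNReal

variable {Ω E : Type} [MeasurableSpace Ω] [MetricSpace E]
  [MeasurableSpace E] [BorelSpace E]

instance (priority := 100) secondCountable_of_sep [TopologicalSpace.SeparableSpace E] :
    SecondCountableTopology E :=
  UniformSpace.secondCountable_of_separable E

variable [TopologicalSpace.SeparableSpace E] [CompleteSpace E]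

/-- probability of `ε`-separation at time `t`. -/
noncomputable def Q (R : WhiteNoiseRDS Ω E) (t ε : ℝ) (y z : E) : ℝ≥0∞ :=
  R.P {ω | ε ≤ dist (R.φ t ω y) (R.φ t ω z)}

/-- the pullback trajectory starting at `x₀`. -/
noncomputable def ψ (R : WhiteNoiseRDS Ω E) (x₀ : E) (u : ℝ) (ω : Ω) : E :=
  R.φ u (R.θ (-u) ω) x₀

variable (R : WhiteNoiseRDS Ω E)

lemma phi_jointly_meas (t : ℝ) : Measurable fun p : Ω × E => R.φ t p.1 p.2 := by
  have : (fun p : Ω × E => R.φ t p.1 p.2)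
      = (fun q : ℝ × Ω × E => R.φ q.1 q.2.1 q.2.2) ∘ (fun p => (t, p)) := rfl
  rw [this]
  exact R.φ_meas.comp (measurable_const.prodMk measurable_id)

lemma theta_comp (a b : ℝ) (ω : Ω) : R.θ a (R.θ b ω) = R.θ (a + b) ω :=
  (R.θ_add a b ω).symm

lemma measurable_Q (t ε : ℝ) : Measurable fun q : E × E => Q R t ε q.1 q.2 := by
  haveI := R.P_prob
  have hS : MeasurableSet {p : (E × E) × Ω | ε ≤ dist (R.φ t p.2 p.1.1) (R.φ t p.2 p.1.2)} := by
    have h1 : Measurable fun p : (E × E) × Ω => R.φ t p.2 p.1.1 :=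
      (phi_jointly_meas R t).comp (measurable_snd.prodMk (measurable_fst.comp measurable_fst))
    have h2 : Measurable fun p : (E × E) × Ω => R.φ t p.2 p.1.2 :=
      (phi_jointly_meas R t).comp (measurable_snd.prodMk (measurable_snd.comp measurable_fst))
    exact measurableSet_le measurable_const (h1.dist h2)
  exact measurable_measure_prodMk_left hS

lemma Q_le_one (t ε : ℝ) (y z : E) : Q R t ε y z ≤ 1 := by
  haveI := R.P_prob
  simpa [Q] using measure_mono (Set.subset_univ _) |>.trans_eq (measure_univ (μ := R.P))

lemma Q_symm (t ε : ℝ) (y z : E) : Q R t ε y z = Q R t ε z y := by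
  simp only [Q, dist_comm]

lemma Q_triangle (t ε : ℝ) (y z w : E) :
    Q R t ε y z ≤ Q R t (ε/2) y w + Q R t (ε/2) w z := by
  refine (measure_mono ?_).trans (measure_union_le _ _)
  intro ω hω
  simp only [Set.mem_setOf_eq, Set.mem_union] at hω ⊢
  by_contra hc
  push_neg at hc
  have := dist_triangle (R.φ t ω y) (R.φ t ω w) (R.φ t ω z)
  linarith [hc.1, hc.2]


set_option linter.unusedSectionVars false

lemma monotone_vec3 {a b c : ℝ} (hab : a ≤ b) (hbc : b ≤ c) : Monotone ![a, b, c] := by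
  intro i j hij
  fin_cases i <;> fin_cases j <;> simp_all <;> first
    | exact hab | exact hbc | exact hab.trans hbc | omega

lemma meas_uncurry (t : ℝ) (ht : 0 ≤ t) :
    Measurable[(inferInstance : MeasurableSpace E).prod (R.F 0 t)]
      (Function.uncurry fun y (ω : Ω) => R.φ t ω y) :=
  measurable_uncurry_of_continuous_of_measurable
    (fun ω => R.φ_cont t ht ω) (fun y => R.φ_adapted t ht y)

lemma measurableSet_S (t ε : ℝ) (ht : 0 ≤ t) :
    MeasurableSet[(inferInstance : MeasurableSpace (E × E)).prod (R.F 0 t)]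
      {p : (E × E) × Ω | ε ≤ dist (R.φ t p.2 p.1.1) (R.φ t p.2 p.1.2)} := by
  have hu := meas_uncurry R t ht
  have hproj1 : @Measurable ((E × E) × Ω) (E × Ω)
      ((inferInstance : MeasurableSpace (E × E)).prod (R.F 0 t))
      ((inferInstance : MeasurableSpace E).prod (R.F 0 t))
      (fun p => (p.1.1, p.2)) :=
    Measurable.prodMk (measurable_fst.comp measurable_fst) measurable_snd
  have hproj2 : @Measurable ((E × E) × Ω) (E × Ω)
      ((inferInstance : MeasurableSpace (E × E)).prod (R.F 0 t))
      ((inferInstance : MeasurableSpace E).prod (R.F 0 t))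
      (fun p => (p.1.2, p.2)) :=
    Measurable.prodMk (measurable_snd.comp measurable_fst) measurable_snd
  have h1 : Measurable[(inferInstance : MeasurableSpace (E × E)).prod (R.F 0 t)]
      fun p : (E × E) × Ω => R.φ t p.2 p.1.1 := hu.comp hproj1
  have h2 : Measurable[(inferInstance : MeasurableSpace (E × E)).prod (R.F 0 t)]
      fun p : (E × E) × Ω => R.φ t p.2 p.1.2 := hu.comp hproj2
  have hΦ : @Measurable ((E × E) × Ω) (E × E)
      ((inferInstance : MeasurableSpace (E × E)).prod (R.F 0 t)) _
      (fun p => (R.φ t p.2 p.1.1, R.φ t p.2 p.1.2)) := h1.prodMk h2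
  have hset : MeasurableSet {q : E × E | ε ≤ dist q.1 q.2} :=
    measurableSet_le measurable_const (measurable_fst.dist measurable_snd)
  exact hΦ hset

lemma indep_F (r t : ℝ) (hr : 0 ≤ r) (ht : 0 ≤ t) :
    ProbabilityTheory.Indep (R.F 0 r) (R.F r (t + r)) R.P := by
  have h := R.F_indep 2 ![0, r, t + r] (monotone_vec3 hr (by linarith))
  have h01 := h.indep (i := 0) (j := 1) (by decide)
  simpa using h01

lemma indepFun_of_indep {β γ : Type} [mβ : MeasurableSpace β] [mγ : MeasurableSpace γ]
    {P : Measure Ω} {m₁ m₂ : MeasurableSpace Ω} (h : ProbabilityTheory.Indep m₁ m₂ P)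
    {f : Ω → β} {g : Ω → γ} (hf : Measurable[m₁] f) (hg' : Measurable[m₂] g) :
    ProbabilityTheory.IndepFun f g P := by
  rw [ProbabilityTheory.IndepFun_iff]
  intro t1 t2 h1 h2
  obtain ⟨s1, hs1, rfl⟩ := h1
  obtain ⟨s2, hs2, rfl⟩ := h2
  exact (ProbabilityTheory.Indep_iff _ _ _).mp h _ _ (hf hs1) (hg' hs2)

lemma indep_measure_eq {Ω₂ : Type} [mΩ₂ : MeasurableSpace Ω₂] {P : Measure Ω}
    [IsProbabilityMeasure P]
    {g : Ω → E × E} {π : Ω → Ω₂} (hg : Measurable g) (hπ : Measurable π)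
    (hIF : ProbabilityTheory.IndepFun g π P) {S : Set ((E × E) × Ω₂)} (hS : MeasurableSet S) :
    P ((fun ω => (g ω, π ω)) ⁻¹' S) = ∫⁻ q, P.map π (Prod.mk q ⁻¹' S) ∂(P.map g) := by
  haveI : IsProbabilityMeasure (P.map π) := Measure.isProbabilityMeasure_map hπ.aemeasurable
  rw [← Measure.map_apply (hg.prodMk hπ) hS,
    (ProbabilityTheory.indepFun_iff_map_prod_eq_prod_map_map hg.aemeasurable
      hπ.aemeasurable).mp hIF,
    Measure.prod_apply hS]

lemma key_transfer (t r ε : ℝ) (ht : 0 ≤ t) (hr : 0 ≤ r) (g : Ω → E × E)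
    (hg : Measurable[R.F 0 r] g) :
    R.P {ω | ε ≤ dist (R.φ t (R.θ r ω) (g ω).1) (R.φ t (R.θ r ω) (g ω).2)}
      = ∫⁻ ω', Q R t ε (g ω').1 (g ω').2 ∂ R.P := by
  classical
  haveI := R.P_prob
  have hgfull : Measurable g := hg.mono (R.F_le 0 r) le_rfl
  have hθm' : @Measurable Ω Ω _ (R.F 0 t) (R.θ r) :=
    (R.θ_meas r).mono le_rfl (R.F_le 0 t)
  have hshift := R.F_shift r 0 t
  rw [zero_add] at hshift
  have hθF : @Measurable Ω Ω (R.F r (t + r)) (R.F 0 t) (R.θ r) := by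
    intro s hs
    rw [hshift]
    exact ⟨s, hs, rfl⟩
  have hIF : @ProbabilityTheory.IndepFun Ω (E × E) Ω _ _ (R.F 0 t) g (R.θ r) R.P :=
    indepFun_of_indep (mγ := R.F 0 t) (indep_F R r t hr ht) hg hθF
  have hSm := measurableSet_S R t ε ht
  have key := indep_measure_eq (mΩ₂ := R.F 0 t) hgfull hθm' hIF
      (S := {p : (E × E) × Ω | ε ≤ dist (R.φ t p.2 p.1.1) (R.φ t p.2 p.1.2)}) hSm
  have e0 : {ω | ε ≤ dist (R.φ t (R.θ r ω) (g ω).1) (R.φ t (R.θ r ω) (g ω).2)}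
      = (fun ω => (g ω, R.θ r ω)) ⁻¹'
        {p : (E × E) × Ω | ε ≤ dist (R.φ t p.2 p.1.1) (R.φ t p.2 p.1.2)} := rfl
  rw [e0, key, ← MeasureTheory.lintegral_map (measurable_Q R t ε) hgfull]
  refine lintegral_congr fun q => ?_
  have hsec' : MeasurableSet[R.F 0 t]
      (Prod.mk q ⁻¹' {p : (E × E) × Ω | ε ≤ dist (R.φ t p.2 p.1.1) (R.φ t p.2 p.1.2)}) :=
    hSm.preimage measurable_prodMk_left
  have hsec : MeasurableSet
      (Prod.mk q ⁻¹' {p : (E × E) × Ω | ε ≤ dist (R.φ t p.2 p.1.1) (R.φ t p.2 p.1.2)}) :=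
    (R.F_le 0 t) _ hsec'
  rw [Measure.map_apply hθm' hsec']
  exact (R.θ_preserves r).measure_preimage hsec.nullMeasurableSet

lemma pullback_dist_eq (x₀ : E) (t r ε : ℝ) (ht : 0 ≤ t) (hr : 0 ≤ r) :
    R.P {ω | ε ≤ dist (ψ R x₀ (t + r) ω) (ψ R x₀ t ω)}
      = ∫⁻ ω', Q R t ε (R.φ r ω' x₀) x₀ ∂ R.P := by
  haveI := R.P_prob
  have h1 : ∀ ω, ψ R x₀ (t + r) ω
      = R.φ t (R.θ r (R.θ (-(t+r)) ω)) (R.φ r (R.θ (-(t+r)) ω) x₀) := by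
    intro ω; rw [ψ, R.φ_cocycle r t hr ht]
  have h2 : ∀ ω, ψ R x₀ t ω = R.φ t (R.θ r (R.θ (-(t+r)) ω)) x₀ := by
    intro ω
    rw [ψ, theta_comp]
    norm_num
  have hev : {ω | ε ≤ dist (ψ R x₀ (t + r) ω) (ψ R x₀ t ω)}
      = R.θ (-(t+r)) ⁻¹' {ω | ε ≤ dist (R.φ t (R.θ r ω) (R.φ r ω x₀)) (R.φ t (R.θ r ω) x₀)} := by
    ext ω
    simp only [Set.mem_setOf_eq, Set.mem_preimage, h1 ω, h2 ω]
  have hgfull : Measurable fun ω => R.φ r ω x₀ :=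
    (R.φ_adapted r hr x₀).mono (R.F_le 0 r) le_rfl
  have hθfull : Measurable (R.θ r) := R.θ_meas r
  have hAmeas : MeasurableSet
      {ω | ε ≤ dist (R.φ t (R.θ r ω) (R.φ r ω x₀)) (R.φ t (R.θ r ω) x₀)} := by
    have hf : Measurable fun ω => R.φ t (R.θ r ω) (R.φ r ω x₀) :=
      (phi_jointly_meas R t).comp (hθfull.prodMk hgfull)
    have hg2 : Measurable fun ω => R.φ t (R.θ r ω) x₀ :=
      (phi_jointly_meas R t).comp (hθfull.prodMk measurable_const)
    exact measurableSet_le measurable_const (hf.dist hg2)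
  rw [hev, (R.θ_preserves (-(t+r))).measure_preimage hAmeas.nullMeasurableSet]
  exact key_transfer R t r ε ht hr (fun ω => (R.φ r ω x₀, x₀))
    ((R.φ_adapted r hr x₀).prodMk measurable_const)

lemma cocycle_int_eq (x₀ e : E) (t r ε : ℝ) (ht : 0 ≤ t) (hr : 0 ≤ r) :
    ∫⁻ ω', Q R t ε (R.φ r ω' x₀) (R.φ r ω' e) ∂ R.P = Q R (t + r) ε x₀ e := by
  have hg : Measurable[R.F 0 r] fun ω => (R.φ r ω x₀, R.φ r ω e) :=
    (R.φ_adapted r hr x₀).prodMk (R.φ_adapted r hr e)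
  have h := key_transfer R t r ε ht hr _ hg
  rw [← h]
  unfold Q
  congr 1
  ext ω
  simp only [Set.mem_setOf_eq, R.φ_cocycle r t hr ht]


lemma nonempty_of_prob (ρ : Measure E) [IsProbabilityMeasure ρ] : Nonempty E := by
  by_contra h
  rw [not_nonempty_iff] at h
  have h1 : ρ Set.univ = 1 := measure_univ
  rw [Set.univ_eq_empty_iff.mpr h] at h1
  simp at h1

lemma inv_transfer (ρ : Measure E) [IsProbabilityMeasure ρ] (hinv : R.Invariant ρ)
    (r : ℝ) (hr : 0 ≤ r) (f : E → ℝ≥0∞) (hf : Measurable f) :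
    ∫⁻ e, ∫⁻ ω', f (R.φ r ω' e) ∂ R.P ∂ρ = ∫⁻ e, f e ∂ρ := by
  haveI := R.P_prob
  haveI : Nonempty E := nonempty_of_prob ρ
  obtain ⟨x₀⟩ := ‹Nonempty E›
  have hmeasmap : Measurable (fun p : E × Ω => R.φ r p.2 p.1) :=
    (phi_jointly_meas R r).comp (measurable_snd.prodMk measurable_fst)
  set κ : Measure E := (ρ.prod R.P).map (fun p : E × Ω => R.φ r p.2 p.1) with hκ
  haveI : IsProbabilityMeasure κ := Measure.isProbabilityMeasure_map hmeasmap.aemeasurable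
  have hκρ : κ = ρ := by
    refine ext_of_forall_lintegral_eq_of_IsFiniteMeasure ?_
    intro fb
    -- the real-valued bounded continuous function
    obtain ⟨C, hC⟩ := fb.bounded
    have hcont : Continuous fun x : E => ((fb x : ℝ≥0) : ℝ) :=
      NNReal.continuous_coe.comp fb.continuous
    set F : BoundedContinuousFunction E ℝ :=
      ⟨⟨fun x => ((fb x : ℝ≥0) : ℝ), hcont⟩, ⟨C, fun x y => by
        have := hC x y
        rw [NNReal.dist_eq] at this
        rw [Real.dist_eq]
        exact this⟩⟩ with hF
    have hFapp : ∀ x, F x = ((fb x : ℝ≥0) : ℝ) := fun _ => rfl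
    have hbound : ∀ x : E, ‖F x‖ ≤ (fb x₀ : ℝ) + C := by
      intro x
      rw [hFapp, Real.norm_eq_abs, abs_of_nonneg (NNReal.coe_nonneg _)]
      have := hC x x₀
      rw [NNReal.dist_eq, abs_sub_comm, abs_le] at this
      linarith [this.2]
    have hint : ∀ (μ : Measure E), IsProbabilityMeasure μ →
        Integrable (fun x => ((fb x : ℝ≥0) : ℝ)) μ := by
      intro μ hμ
      exact ⟨hcont.aestronglyMeasurable,
        HasFiniteIntegral.of_bounded (C := (fb x₀ : ℝ) + C) (ae_of_all _ hbound)⟩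
    have h1 : ∫⁻ x, fb x ∂κ = ENNReal.ofReal (∫ x, ((fb x : ℝ≥0) : ℝ) ∂κ) :=
      lintegral_coe_eq_integral _ (hint κ inferInstance)
    have h2 : ∫⁻ x, fb x ∂ρ = ENNReal.ofReal (∫ x, ((fb x : ℝ≥0) : ℝ) ∂ρ) :=
      lintegral_coe_eq_integral _ (hint ρ inferInstance)
    rw [h1, h2]
    congr 1
    have h3 : ∫ x, ((fb x : ℝ≥0) : ℝ) ∂κ
        = ∫ p : E × Ω, ((fb (R.φ r p.2 p.1) : ℝ≥0) : ℝ) ∂(ρ.prod R.P) := by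
      rw [hκ, integral_map hmeasmap.aemeasurable hcont.aestronglyMeasurable]
    have hintprod : Integrable (fun p : E × Ω => ((fb (R.φ r p.2 p.1) : ℝ≥0) : ℝ))
        (ρ.prod R.P) := by
      refine ⟨(hcont.measurable.comp hmeasmap).aestronglyMeasurable, ?_⟩
      exact HasFiniteIntegral.of_bounded (C := (fb x₀ : ℝ) + C)
        (ae_of_all _ fun p => hbound (R.φ r p.2 p.1))
    have h4 : ∫ p : E × Ω, ((fb (R.φ r p.2 p.1) : ℝ≥0) : ℝ) ∂(ρ.prod R.P)
        = ∫ e, ∫ ω, ((fb (R.φ r ω e) : ℝ≥0) : ℝ) ∂ R.P ∂ρ := integral_prod _ hintprod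
    have h5 := hinv r hr F
    rw [h3, h4]
    exact h5
  have hswap : ∫⁻ e, ∫⁻ ω', f (R.φ r ω' e) ∂ R.P ∂ρ
      = ∫⁻ p : E × Ω, f (R.φ r p.2 p.1) ∂(ρ.prod R.P) :=
    (lintegral_prod _ (hf.comp hmeasmap).aemeasurable).symm
  rw [hswap, ← lintegral_map hf hmeasmap, ← hκ, hκρ]

lemma measurable_Q_left (t ε : ℝ) (x₀ : E) : Measurable fun e => Q R t ε x₀ e :=
  (measurable_Q R t ε).comp (measurable_const.prodMk measurable_id)

lemma measurable_Q_right (t ε : ℝ) (x₀ : E) : Measurable fun e => Q R t ε e x₀ :=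
  (measurable_Q R t ε).comp (measurable_id.prodMk measurable_const)

lemma G_tendsto (ρ : Measure E) [IsProbabilityMeasure ρ]
    (hconv : ∀ x y : E, ∀ ε : ℝ, 0 < ε →
      Tendsto (fun t : ℝ => R.P {ω | ε ≤ dist (R.φ t ω x) (R.φ t ω y)}) atTop (𝓝 0))
    (x₀ : E) (ε : ℝ) (hε : 0 < ε) :
    Tendsto (fun t : ℝ => ∫⁻ e, Q R t ε x₀ e ∂ρ) atTop (𝓝 0) := by
  rw [Filter.tendsto_iff_seq_tendsto]
  intro u hu
  have h := tendsto_lintegral_of_dominated_convergence (μ := ρ)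
      (F := fun n e => Q R (u n) ε x₀ e) (f := fun _ => 0) (bound := fun _ => 1)
      (fun n => measurable_Q_left R (u n) ε x₀)
      (fun n => ae_of_all _ fun e => Q_le_one R (u n) ε x₀ e)
      (by simp)
      (ae_of_all _ fun e => (hconv x₀ e ε hε).comp hu)
  simpa [Function.comp_def] using h

lemma cauchy_bound (ρ : Measure E) [IsProbabilityMeasure ρ] (hinv : R.Invariant ρ)
    (x₀ : E) (t r ε : ℝ) (ht : 0 ≤ t) (hr : 0 ≤ r) (hε : 0 < ε) :
    R.P {ω | ε ≤ dist (ψ R x₀ (t + r) ω) (ψ R x₀ t ω)}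
      ≤ (∫⁻ e, Q R (t + r) (ε/2) x₀ e ∂ρ) + ∫⁻ e, Q R t (ε/2) x₀ e ∂ρ := by
  haveI := R.P_prob
  rw [pullback_dist_eq R x₀ t r ε ht hr]
  have ha : Measurable fun p : Ω × E => R.φ r p.1 x₀ :=
    (phi_jointly_meas R r).comp (measurable_fst.prodMk measurable_const)
  have hb : Measurable fun p : Ω × E => R.φ r p.1 p.2 := phi_jointly_meas R r
  have hm1 : Measurable fun p : Ω × E => Q R t (ε/2) (R.φ r p.1 x₀) (R.φ r p.1 p.2) :=
    (measurable_Q R t (ε/2)).comp (ha.prodMk hb)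
  have hm2 : Measurable fun p : Ω × E => Q R t (ε/2) (R.φ r p.1 p.2) x₀ :=
    (measurable_Q R t (ε/2)).comp (hb.prodMk measurable_const)
  have step1 : ∀ ω', Q R t ε (R.φ r ω' x₀) x₀
      ≤ ∫⁻ e, (Q R t (ε/2) (R.φ r ω' x₀) (R.φ r ω' e)
          + Q R t (ε/2) (R.φ r ω' e) x₀) ∂ρ := by
    intro ω'
    have hconst : Q R t ε (R.φ r ω' x₀) x₀ = ∫⁻ _, Q R t ε (R.φ r ω' x₀) x₀ ∂ρ := by
      simp
    rw [hconst]
    exact lintegral_mono fun e => Q_triangle R t ε _ _ _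
  have swap : ∫⁻ ω', ∫⁻ e, (Q R t (ε/2) (R.φ r ω' x₀) (R.φ r ω' e)
        + Q R t (ε/2) (R.φ r ω' e) x₀) ∂ρ ∂ R.P
      = ∫⁻ e, ∫⁻ ω', (Q R t (ε/2) (R.φ r ω' x₀) (R.φ r ω' e)
        + Q R t (ε/2) (R.φ r ω' e) x₀) ∂ R.P ∂ρ :=
    lintegral_lintegral_swap (hm1.add hm2).aemeasurable
  have inner_add : ∀ e, ∫⁻ ω', (Q R t (ε/2) (R.φ r ω' x₀) (R.φ r ω' e)
        + Q R t (ε/2) (R.φ r ω' e) x₀) ∂ R.P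
      = (∫⁻ ω', Q R t (ε/2) (R.φ r ω' x₀) (R.φ r ω' e) ∂ R.P)
        + ∫⁻ ω', Q R t (ε/2) (R.φ r ω' e) x₀ ∂ R.P := by
    intro e
    exact lintegral_add_left (hm1.comp (measurable_id.prodMk measurable_const)) _
  have meas_i1 : Measurable fun e => ∫⁻ ω', Q R t (ε/2) (R.φ r ω' x₀) (R.φ r ω' e) ∂ R.P :=
    Measurable.lintegral_prod_right (hm1.comp measurable_swap)
  calc ∫⁻ ω', Q R t ε (R.φ r ω' x₀) x₀ ∂ R.P
      ≤ ∫⁻ ω', ∫⁻ e, (Q R t (ε/2) (R.φ r ω' x₀) (R.φ r ω' e)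
          + Q R t (ε/2) (R.φ r ω' e) x₀) ∂ρ ∂ R.P := lintegral_mono step1
    _ = ∫⁻ e, ∫⁻ ω', (Q R t (ε/2) (R.φ r ω' x₀) (R.φ r ω' e)
          + Q R t (ε/2) (R.φ r ω' e) x₀) ∂ R.P ∂ρ := swap
    _ = (∫⁻ e, ∫⁻ ω', Q R t (ε/2) (R.φ r ω' x₀) (R.φ r ω' e) ∂ R.P ∂ρ)
          + ∫⁻ e, ∫⁻ ω', Q R t (ε/2) (R.φ r ω' e) x₀ ∂ R.P ∂ρ := by
        rw [← lintegral_add_left meas_i1]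
        exact lintegral_congr inner_add
    _ = (∫⁻ e, Q R (t + r) (ε/2) x₀ e ∂ρ) + ∫⁻ e, Q R t (ε/2) x₀ e ∂ρ := by
        congr 1
        · exact lintegral_congr fun e => cocycle_int_eq R x₀ e t r (ε/2) ht hr
        · rw [inv_transfer R ρ hinv r hr (fun y => Q R t (ε/2) y x₀)
            (measurable_Q_right R t (ε/2) x₀)]
          exact lintegral_congr fun e => Q_symm R t (ε/2) e x₀

lemma cauchy_est (ρ : Measure E) [IsProbabilityMeasure ρ] (hinv : R.Invariant ρ)
    (hconv : ∀ x y : E, ∀ ε : ℝ, 0 < ε →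
      Tendsto (fun t : ℝ => R.P {ω | ε ≤ dist (R.φ t ω x) (R.φ t ω y)}) atTop (𝓝 0))
    (x₀ : E) (ε : ℝ) (hε : 0 < ε) (δ : ℝ≥0∞) (hδ : δ ≠ 0) :
    ∃ T : ℝ, 0 ≤ T ∧ ∀ u v : ℝ, T ≤ u → T ≤ v →
      R.P {ω | ε ≤ dist (ψ R x₀ u ω) (ψ R x₀ v ω)} ≤ δ := by
  have hG := G_tendsto R ρ hconv x₀ (ε/2) (by linarith)
  have hev : ∀ᶠ w : ℝ in atTop, (∫⁻ e, Q R w (ε/2) x₀ e ∂ρ) < δ / 2 :=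
    hG.eventually_lt_const (ENNReal.half_pos hδ)
  obtain ⟨T₀, hT₀⟩ := eventually_atTop.mp hev
  refine ⟨max T₀ 0, le_max_right _ _, ?_⟩
  have key : ∀ u v : ℝ, max T₀ 0 ≤ u → max T₀ 0 ≤ v → v ≤ u →
      R.P {ω | ε ≤ dist (ψ R x₀ u ω) (ψ R x₀ v ω)} ≤ δ := by
    intro u v hu hv hvu
    have hv0 : 0 ≤ v := le_trans (le_max_right _ _) hv
    have huv : u = v + (u - v) := by ring
    have hb := cauchy_bound R ρ hinv x₀ v (u - v) ε hv0 (by linarith) hε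
    rw [← huv] at hb
    refine hb.trans ?_
    have h1 := hT₀ u (le_trans (le_max_left _ _) hu)
    have h2 := hT₀ v (le_trans (le_max_left _ _) hv)
    calc (∫⁻ e, Q R u (ε/2) x₀ e ∂ρ) + ∫⁻ e, Q R v (ε/2) x₀ e ∂ρ
        ≤ δ / 2 + δ / 2 := add_le_add h1.le h2.le
      _ = δ := ENNReal.add_halves δ
  intro u v hu hv
  rcases le_total v u with hvu | huv
  · exact key u v hu hv hvu
  · have hsymm : {ω | ε ≤ dist (ψ R x₀ u ω) (ψ R x₀ v ω)}
        = {ω | ε ≤ dist (ψ R x₀ v ω) (ψ R x₀ u ω)} := by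
      simp only [dist_comm]
    rw [hsymm]
    exact key v u hv hu huv


lemma F0_le : R.F0 ≤ ‹MeasurableSpace Ω› := by
  refine iSup_le fun s => iSup_le fun _ => R.F_le s 0

lemma psi_meas_full (x₀ : E) (u : ℝ) : Measurable (ψ R x₀ u) :=
  (phi_jointly_meas R u).comp ((R.θ_meas (-u)).prodMk measurable_const)

lemma psi_meas_F0 (x₀ : E) (u : ℝ) (hu : 0 ≤ u) : Measurable[R.F0] (ψ R x₀ u) := by
  intro B hB
  have h1 : MeasurableSet[R.F 0 u] ((fun ω => R.φ u ω x₀) ⁻¹' B) := R.φ_adapted u hu x₀ hB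
  have hshift := R.F_shift (-u) 0 u
  have e0 : (0 : ℝ) + -u = -u := by ring
  have e1 : u + -u = 0 := by ring
  rw [e0, e1] at hshift
  have h2 : MeasurableSet[R.F (-u) 0] (ψ R x₀ u ⁻¹' B) := by
    rw [hshift]
    exact ⟨_, h1, rfl⟩
  have hle : R.F (-u) 0 ≤ R.F0 :=
    le_iSup₂ (f := fun (s : ℝ) (_ : s ∈ Set.Iic (0:ℝ)) => R.F s 0) (-u)
      (by simpa using neg_nonpos.mpr hu)
  exact hle _ h2

lemma psi_shift (x₀ : E) (t u : ℝ) (ht : 0 ≤ t) (hu : 0 ≤ u) (ω : Ω) :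
    ψ R x₀ (t + u) (R.θ t ω) = R.φ t ω (ψ R x₀ u ω) := by
  rw [ψ, theta_comp]
  have e : -(t + u) + t = -u := by ring
  rw [e, R.φ_cocycle u t hu ht, theta_comp]
  have e2 : u + -u = 0 := by ring
  rw [e2, R.θ_zero]
  rfl

lemma measurableSet_conv {X : Type} [mX : MeasurableSpace X] (f : ℕ → X → E)
    (hf : ∀ i, Measurable (f i)) :
    MeasurableSet {x | ∃ c : E, Tendsto (fun n => f n x) atTop (𝓝 c)} :=
  measurableSet_exists_tendsto hf

lemma measurable_limit' {X : Type} [mX : MeasurableSpace X] {f : ℕ → X → E} {g : X → E}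
    (hf : ∀ i, Measurable (f i)) (h : ∀ x, Tendsto (fun k => f k x) atTop (𝓝 (g x))) :
    Measurable g :=
  measurable_of_tendsto_metrizable' atTop hf (tendsto_pi_nhds.mpr h)

theorem main (ρ : Measure E) [IsProbabilityMeasure ρ] (hinv : R.Invariant ρ)
    (hconv : ∀ x y : E, ∀ ε : ℝ, 0 < ε →
      Tendsto (fun t : ℝ => R.P {ω | ε ≤ dist (R.φ t ω x) (R.φ t ω y)}) atTop (𝓝 0)) :
    R.WeakSynchronization := by
  classical
  haveI := R.P_prob
  haveI : Nonempty E := nonempty_of_prob ρ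
  obtain ⟨x₀⟩ := ‹Nonempty E›
  -- choice of good times
  have hchoice : ∀ k : ℕ, ∃ T : ℝ, 0 ≤ T ∧ ∀ u v : ℝ, T ≤ u → T ≤ v →
      R.P {ω | (1/2 : ℝ)^k ≤ dist (ψ R x₀ u ω) (ψ R x₀ v ω)} ≤ (2⁻¹ : ℝ≥0∞)^k := by
    intro k
    refine cauchy_est R ρ hinv hconv x₀ ((1/2 : ℝ)^k) (by positivity) _ ?_
    simp
  choose T hT0 hT using hchoice
  set n : ℕ → ℝ := fun k => Nat.rec (max (T 0) 0) (fun k nk => max (T (k+1)) (nk + 1)) k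
    with hn
  have hn_succ : ∀ k, n (k+1) = max (T (k+1)) (n k + 1) := fun k => rfl
  have hnT : ∀ k, T k ≤ n k := by
    intro k
    cases k with
    | zero => exact le_max_left _ _
    | succ m => rw [hn_succ m]; exact le_max_left _ _
  have hn_step : ∀ k, n k + 1 ≤ n (k+1) := by
    intro k; rw [hn_succ k]; exact le_max_right _ _
  have hn_nonneg : ∀ k, 0 ≤ n k := by
    intro k
    induction k with
    | zero => exact le_max_right _ _
    | succ m ih => exact le_trans (by linarith) (hn_step m)
  have hn_mono : ∀ k, n k ≤ n (k+1) := fun k => by linarith [hn_step k]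
  have hn_ge : ∀ k : ℕ, (k : ℝ) ≤ n k := by
    intro k
    induction k with
    | zero => simpa using hn_nonneg 0
    | succ m ih =>
        have := hn_step m
        push_cast
        linarith
  have hn_tendsto : Tendsto n atTop atTop :=
    tendsto_atTop_mono hn_ge tendsto_natCast_atTop_atTop
  -- Borel–Cantelli
  set Ek : ℕ → Set Ω :=
    fun k => {ω | (1/2 : ℝ)^k ≤ dist (ψ R x₀ (n (k+1)) ω) (ψ R x₀ (n k) ω)} with hEk
  have hEkbd : ∀ k, R.P (Ek k) ≤ (2⁻¹ : ℝ≥0∞)^k := by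
    intro k
    exact hT k (n (k+1)) (n k) ((hnT k).trans (hn_mono k)) (hnT k)
  have hsum : (∑' k, R.P (Ek k)) ≠ ∞ := by
    refine ne_top_of_le_ne_top ?_ (ENNReal.tsum_le_tsum hEkbd)
    rw [ENNReal.tsum_geometric]
    simp
  have hae_not : ∀ᵐ ω ∂ R.P, ∀ᶠ k in atTop, ω ∉ Ek k := ae_eventually_notMem hsum
  -- convergence set
  set Cs : Set Ω := {ω | ∃ c : E, Tendsto (fun k => ψ R x₀ (n k) ω) atTop (𝓝 c)} with hCs
  have hCmeas : MeasurableSet[R.F0] Cs :=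
    measurableSet_conv (mX := R.F0) _ (fun k => psi_meas_F0 R x₀ (n k) (hn_nonneg k))
  have hCae : ∀ᵐ ω ∂ R.P, ω ∈ Cs := by
    filter_upwards [hae_not] with ω hω
    obtain ⟨K, hK⟩ := eventually_atTop.mp hω
    have hdist : ∀ j : ℕ, dist (ψ R x₀ (n (j+K)) ω) (ψ R x₀ (n (j+1+K)) ω)
        ≤ (1/2 : ℝ)^K * (1/2 : ℝ)^j := by
      intro j
      have h1 := hK (j+K) (by omega)
      rw [hEk, Set.mem_setOf_eq, not_le] at h1
      have e : j+1+K = j+K+1 := by omega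
      rw [e, dist_comm]
      calc dist (ψ R x₀ (n (j+K+1)) ω) (ψ R x₀ (n (j+K)) ω)
          ≤ (1/2 : ℝ)^(j+K) := h1.le
        _ = (1/2 : ℝ)^K * (1/2 : ℝ)^j := by rw [pow_add]; ring
    have hcauchy : CauchySeq (fun j => ψ R x₀ (n (j+K)) ω) :=
      cauchySeq_of_le_geometric (1/2 : ℝ) ((1/2 : ℝ)^K) (by norm_num) hdist
    obtain ⟨c, hc⟩ := cauchySeq_tendsto_of_complete hcauchy
    exact ⟨c, (tendsto_add_atTop_iff_nat K).mp hc⟩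
  -- the limit random point
  set ψ' : ℕ → Ω → E := fun k ω => if ω ∈ Cs then ψ R x₀ (n k) ω else x₀ with hψ'
  have hψ'meas : ∀ k, Measurable[R.F0] (ψ' k) := fun k =>
    Measurable.ite hCmeas (psi_meas_F0 R x₀ (n k) (hn_nonneg k)) measurable_const
  have hex : ∀ ω, ∃ c : E, Tendsto (fun k => ψ' k ω) atTop (𝓝 c) := by
    intro ω
    by_cases hω : ω ∈ Cs
    · refine ⟨hω.choose, ?_⟩
      refine (tendsto_congr fun k => ?_).mpr hω.choose_spec
      simp [hψ', hω]
    · refine ⟨x₀, ?_⟩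
      refine (tendsto_congr fun k => ?_).mpr tendsto_const_nhds
      simp [hψ', hω]
  set a : Ω → E := fun ω => (hex ω).choose with ha
  have haten : ∀ ω, Tendsto (fun k => ψ' k ω) atTop (𝓝 (a ω)) := fun ω => (hex ω).choose_spec
  have hameasF0 : Measurable[R.F0] a := measurable_limit' (mX := R.F0) hψ'meas haten
  have hameas : Measurable a := hameasF0.mono (F0_le R) le_rfl
  have haea : ∀ᵐ ω ∂ R.P, Tendsto (fun k => ψ R x₀ (n k) ω) atTop (𝓝 (a ω)) := by
    filter_upwards [hCae] with ω hω
    have h := haten ω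
    refine (tendsto_congr fun k => ?_).mp h
    simp [hψ', hω]
  -- convergence in measure along the sequence
  have hTIM : TendstoInMeasure R.P (fun k => ψ R x₀ (n k)) atTop a :=
    tendstoInMeasure_of_tendsto_ae
      (fun k => (psi_meas_full R x₀ (n k)).aestronglyMeasurable) haea
  -- convergence in probability of the pullback to `a`, over real times
  have hconv2 : ∀ ε : ℝ, 0 < ε →
      Tendsto (fun t : ℝ => R.P {ω | ε ≤ dist (ψ R x₀ t ω) (a ω)}) atTop (𝓝 0) := by
    intro ε hε
    rw [ENNReal.tendsto_nhds_zero]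
    intro δ hδ
    obtain ⟨Tc, hTcnn, hTest⟩ := cauchy_est R ρ hinv hconv x₀ (ε/2) (by linarith) (δ/2)
      (ENNReal.half_pos hδ.ne').ne'
    have h2 : ∀ᶠ k in atTop, R.P {ω | ε/2 ≤ dist (ψ R x₀ (n k) ω) (a ω)} ≤ δ/2 :=
      (ENNReal.tendsto_nhds_zero.mp (tendstoInMeasure_iff_dist.mp hTIM (ε/2) (by linarith))) (δ/2)
        (ENNReal.half_pos hδ.ne')
    have h3 : ∀ᶠ k in atTop, Tc ≤ n k := hn_tendsto.eventually_ge_atTop Tc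
    obtain ⟨k, hk1, hk2⟩ := (h2.and h3).exists
    rw [eventually_atTop]
    refine ⟨Tc, fun t htt => ?_⟩
    have hsub : {ω | ε ≤ dist (ψ R x₀ t ω) (a ω)}
        ⊆ {ω | ε/2 ≤ dist (ψ R x₀ t ω) (ψ R x₀ (n k) ω)}
          ∪ {ω | ε/2 ≤ dist (ψ R x₀ (n k) ω) (a ω)} := by
      intro ω hω
      simp only [Set.mem_setOf_eq, Set.mem_union] at hω ⊢
      by_contra hcon
      push_neg at hcon
      have := dist_triangle (ψ R x₀ t ω) (ψ R x₀ (n k) ω) (a ω)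
      linarith [hcon.1, hcon.2]
    calc R.P {ω | ε ≤ dist (ψ R x₀ t ω) (a ω)}
        ≤ R.P ({ω | ε/2 ≤ dist (ψ R x₀ t ω) (ψ R x₀ (n k) ω)}
            ∪ {ω | ε/2 ≤ dist (ψ R x₀ (n k) ω) (a ω)}) := measure_mono hsub
      _ ≤ R.P {ω | ε/2 ≤ dist (ψ R x₀ t ω) (ψ R x₀ (n k) ω)}
            + R.P {ω | ε/2 ≤ dist (ψ R x₀ (n k) ω) (a ω)} := measure_union_le _ _
      _ ≤ δ/2 + δ/2 := add_le_add (hTest t (n k) htt hk2) hk1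
      _ = δ := ENNReal.add_halves δ
  -- pullback attraction of arbitrary points
  have hpull : ∀ x : E, ∀ ε : ℝ, 0 < ε →
      Tendsto (fun t : ℝ => R.P {ω | ε ≤ dist (R.φ t (R.θ (-t) ω) x) (a ω)}) atTop (𝓝 0) := by
    intro x ε hε
    have hQ : Tendsto (fun t => Q R t (ε/2) x x₀) atTop (𝓝 0) := hconv x x₀ (ε/2) (by linarith)
    have hB := hconv2 (ε/2) (by linarith)
    have hbound : ∀ t : ℝ, R.P {ω | ε ≤ dist (R.φ t (R.θ (-t) ω) x) (a ω)}
        ≤ Q R t (ε/2) x x₀ + R.P {ω | ε/2 ≤ dist (ψ R x₀ t ω) (a ω)} := by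
      intro t
      have hsub : {ω | ε ≤ dist (R.φ t (R.θ (-t) ω) x) (a ω)}
          ⊆ {ω | ε/2 ≤ dist (R.φ t (R.θ (-t) ω) x) (ψ R x₀ t ω)}
            ∪ {ω | ε/2 ≤ dist (ψ R x₀ t ω) (a ω)} := by
        intro ω hω
        simp only [Set.mem_setOf_eq, Set.mem_union, ψ] at hω ⊢
        by_contra hcon
        push_neg at hcon
        have := dist_triangle (R.φ t (R.θ (-t) ω) x) (R.φ t (R.θ (-t) ω) x₀) (a ω)
        linarith [hcon.1, hcon.2]
      have hΦ1 : Measurable fun ω => R.φ t ω x :=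
        (phi_jointly_meas R t).comp (measurable_id.prodMk measurable_const)
      have hΦ2 : Measurable fun ω => R.φ t ω x₀ :=
        (phi_jointly_meas R t).comp (measurable_id.prodMk measurable_const)
      have hAm : MeasurableSet {ω | ε/2 ≤ dist (R.φ t ω x) (R.φ t ω x₀)} := by
        have hpairm : Measurable fun ω => (R.φ t ω x, R.φ t ω x₀) := hΦ1.prodMk hΦ2
        exact hpairm (measurableSet_le measurable_const (measurable_fst.dist measurable_snd))
      have hfirst : R.P {ω | ε/2 ≤ dist (R.φ t (R.θ (-t) ω) x) (ψ R x₀ t ω)}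
          = Q R t (ε/2) x x₀ := by
        have he : {ω | ε/2 ≤ dist (R.φ t (R.θ (-t) ω) x) (ψ R x₀ t ω)}
            = R.θ (-t) ⁻¹' {ω | ε/2 ≤ dist (R.φ t ω x) (R.φ t ω x₀)} := rfl
        rw [he]
        exact (R.θ_preserves (-t)).measure_preimage hAm.nullMeasurableSet
      calc R.P {ω | ε ≤ dist (R.φ t (R.θ (-t) ω) x) (a ω)}
          ≤ R.P ({ω | ε/2 ≤ dist (R.φ t (R.θ (-t) ω) x) (ψ R x₀ t ω)}
              ∪ {ω | ε/2 ≤ dist (ψ R x₀ t ω) (a ω)}) := measure_mono hsub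
        _ ≤ R.P {ω | ε/2 ≤ dist (R.φ t (R.θ (-t) ω) x) (ψ R x₀ t ω)}
              + R.P {ω | ε/2 ≤ dist (ψ R x₀ t ω) (a ω)} := measure_union_le _ _
        _ = Q R t (ε/2) x x₀ + R.P {ω | ε/2 ≤ dist (ψ R x₀ t ω) (a ω)} := by rw [hfirst]
    have hsum0 : Tendsto (fun t : ℝ => Q R t (ε/2) x x₀
        + R.P {ω | ε/2 ≤ dist (ψ R x₀ t ω) (a ω)}) atTop (𝓝 0) := by
      have := hQ.add hB
      simpa using this
    exact tendsto_of_tendsto_of_tendsto_of_le_of_le tendsto_const_nhds hsum0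
      (fun t => bot_le) hbound
  -- equivariance
  have hequi : ∀ t : ℝ, 0 ≤ t → ∀ᵐ ω ∂ R.P, R.φ t ω (a ω) = a (R.θ t ω) := by
    intro t ht
    have hsubt : Tendsto (fun k => n k - t) atTop atTop :=
      tendsto_atTop_add_const_right atTop (-t) hn_tendsto
    have hIM : TendstoInMeasure R.P (fun k => ψ R x₀ (n k - t)) atTop a := by
      rw [tendstoInMeasure_iff_dist]
      intro ε hε
      exact (hconv2 ε hε).comp hsubt
    obtain ⟨ks, hks_mono, hks_ae⟩ := hIM.exists_seq_tendsto_ae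
    have hCae' : ∀ᵐ ω ∂ R.P,
        Tendsto (fun k => ψ R x₀ (n k) (R.θ t ω)) atTop (𝓝 (a (R.θ t ω))) := by
      rw [ae_iff] at haea ⊢
      have he : {ω | ¬ Tendsto (fun k => ψ R x₀ (n k) (R.θ t ω)) atTop (𝓝 (a (R.θ t ω)))}
          = R.θ t ⁻¹' {ω' | ¬ Tendsto (fun k => ψ R x₀ (n k) ω') atTop (𝓝 (a ω'))} := rfl
      rw [he]
      exact (R.θ_preserves t).quasiMeasurePreserving.preimage_null haea
    filter_upwards [hks_ae, hCae'] with ω hω1 hω2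
    have hphi : Tendsto (fun i => R.φ t ω (ψ R x₀ (n (ks i) - t) ω)) atTop
        (𝓝 (R.φ t ω (a ω))) := ((R.φ_cont t ht ω).tendsto (a ω)).comp hω1
    have hsub2 : Tendsto (fun i => ψ R x₀ (n (ks i)) (R.θ t ω)) atTop
        (𝓝 (a (R.θ t ω))) := hω2.comp hks_mono.tendsto_atTop
    have hEq : ∀ᶠ i in atTop,
        ψ R x₀ (n (ks i)) (R.θ t ω) = R.φ t ω (ψ R x₀ (n (ks i) - t) ω) := by
      have hev : ∀ᶠ i in atTop, t ≤ n (ks i) :=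
        (hn_tendsto.comp hks_mono.tendsto_atTop).eventually_ge_atTop t
      filter_upwards [hev] with i hi
      have h := psi_shift R x₀ t (n (ks i) - t) ht (by linarith) ω
      have e : t + (n (ks i) - t) = n (ks i) := by ring
      rw [e] at h
      exact h
    have hX2 : Tendsto (fun i => ψ R x₀ (n (ks i)) (R.θ t ω)) atTop
        (𝓝 (R.φ t ω (a ω))) := hphi.congr' (hEq.mono fun i h => h.symm)
    exact tendsto_nhds_unique hX2 hsub2
  exact ⟨a, hameasF0, hequi, fun x ε hε => hpull x ε hε⟩

end WeakSyncAux
/-- **Corollary.** If a white-noise RDS on a complete separable metric space has an invariant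
probability measure `ρ` and the distance of any two trajectories converges to `0` in
probability, then weak synchronization holds. -/
theorem weakSynchronization_of_pairwise_convergence
    {Ω E : Type} [MeasurableSpace Ω] [MetricSpace E] [CompleteSpace E]
    [TopologicalSpace.SeparableSpace E] [MeasurableSpace E] [BorelSpace E]
    (R : WhiteNoiseRDS Ω E) (ρ : MeasureTheory.Measure E) [MeasureTheory.IsProbabilityMeasure ρ]
    (hinv : R.Invariant ρ)
    (hconv : ∀ x y : E, ∀ ε : ℝ, 0 < ε →
      Filter.Tendsto (fun t : ℝ => R.P {ω | ε ≤ dist (R.φ t ω x) (R.φ t ω y)})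
        Filter.atTop (nhds 0)) :
    R.WeakSynchronization :=
  WeakSyncAux.main R ρ hinv hconv
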